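/- Let R be a commutative ring and x_1, x_2, x_3, … elements of R. For all integers m ≥ 1 and n ≥ 1, the sum over all weakly increasing sequences 1 ≤ j_1 ≤ j_2 ≤ … ≤ j_{m−1} ≤ n of the products ∏_{k=1}^{m−1} (x_{j_k} − x_{j_k + k}) equals ∏_{t=n+1}^{m+n−1} (x_1 − x_t). (For m = 1 both sides are the empty product 1.) -/

import Mathlib

private theorem lp_mono_snoc {d n' : ℕ} {g : Fin d → ℕ} (hg : Monotone g)
    (hle : ∀ k, g k ≤ n') : Monotone (Fin.snoc g n' : Fin (d+1) → ℕ) := by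
  rw [Fin.monotone_iff_le_succ]
  intro i
  rcases Fin.eq_castSucc_or_eq_last i.succ with ⟨j, hj⟩ | hl
  · rw [hj, Fin.snoc_castSucc, Fin.snoc_castSucc]
    apply hg
    have : (j : ℕ) = (i : ℕ) + 1 := by
      have := congrArg (Fin.val) hj
      simpa using this.symm
    exact Fin.le_def.mpr (by omega)
  · rw [hl, Fin.snoc_castSucc, Fin.snoc_last]
    exact hle i

open Finset in
private theorem lp_key {R : Type*} [CommRing R] (x : ℕ → R) :
    ∀ (d n : ℕ), 1 ≤ n →
    (∑ j ∈ (Fintype.piFinset (fun _ : Fin d => Finset.Icc 1 n)).filter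
        (fun j => Monotone j),
      ∏ k : Fin d, (x (j k) - x (j k + ((k : ℕ) + 1))))
    = ∏ t ∈ Finset.Icc (n + 1) (n + d), (x 1 - x t) := by
  classical
  intro d
  induction d with
  | zero =>
    intro n hn
    have hmono : ∀ j : Fin 0 → ℕ, Monotone j := fun j a => a.elim0
    rw [Finset.filter_true_of_mem (fun j _ => hmono j)]
    simp
  | succ d ih =>
    intro n hn
    induction n, hn using Nat.le_induction with
    | base =>
      have hpi : (Fintype.piFinset (fun _ : Fin (d+1) => Finset.Icc 1 1))
          = {fun _ => 1} := by
        ext j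
        simp [Fintype.mem_piFinset, funext_iff]
      rw [hpi, Finset.filter_singleton, if_pos monotone_const, Finset.sum_singleton]
      rw [Fin.prod_univ_eq_prod_range (fun k => (x 1 - x (1 + (k + 1)))) (d+1)]
      rw [← Finset.Ico_add_one_right_eq_Icc, Finset.prod_Ico_eq_prod_range]
      apply Finset.prod_congr (by congr 1; omega)
      intro i _
      congr 2
      omega
    | succ n hn ihn =>
      set s := (Fintype.piFinset (fun _ : Fin (d+1) => Finset.Icc 1 (n+1))).filter
        (fun j => Monotone j) with hs
      rw [← Finset.sum_filter_add_sum_filter_not s (fun j => j (Fin.last d) = n + 1)]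
      have hA : s.filter (fun j => ¬ j (Fin.last d) = n + 1)
          = (Fintype.piFinset (fun _ : Fin (d+1) => Finset.Icc 1 n)).filter
            (fun j => Monotone j) := by
        ext j
        simp only [hs, Finset.mem_filter, Fintype.mem_piFinset, Finset.mem_Icc]
        constructor
        · rintro ⟨⟨hmem, hmono⟩, hne⟩
          refine ⟨fun k => ⟨(hmem k).1, ?_⟩, hmono⟩
          have h1 := hmono (Fin.le_last k)
          have h2 := (hmem (Fin.last d)).2
          omega
        · rintro ⟨hmem, hmono⟩
          have h2 := (hmem (Fin.last d)).2
          exact ⟨⟨fun k => ⟨(hmem k).1, le_trans (hmem k).2 (by omega)⟩, hmono⟩, by omega⟩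
      have hB : (∑ j ∈ s.filter (fun j => j (Fin.last d) = n + 1),
            ∏ k : Fin (d+1), (x (j k) - x (j k + ((k : ℕ) + 1))))
          = (∑ g ∈ (Fintype.piFinset (fun _ : Fin d => Finset.Icc 1 (n+1))).filter
              (fun g => Monotone g),
            (∏ k : Fin d, (x (g k) - x (g k + ((k : ℕ) + 1))))
              * (x (n+1) - x ((n+1) + (d+1)))) := by
        apply Finset.sum_nbij' (i := fun j => Fin.init j)
          (j := fun g => (Fin.snoc g (n+1) : Fin (d+1) → ℕ))
        · intro j hj
          simp only [hs, Finset.mem_filter, Fintype.mem_piFinset] at hj ⊢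
          refine ⟨fun k => hj.1.1 k.castSucc, ?_⟩
          intro a b hab
          exact hj.1.2 (Fin.castSucc_le_castSucc_iff.mpr hab)
        · intro g hg
          simp only [hs, Finset.mem_filter, Fintype.mem_piFinset, Finset.mem_Icc] at hg ⊢
          refine ⟨⟨?_, lp_mono_snoc hg.2 (fun k => (hg.1 k).2)⟩, by simp⟩
          intro k
          rcases Fin.eq_castSucc_or_eq_last k with ⟨k', rfl⟩ | rfl
          · simp only [Fin.snoc_castSucc]; exact ⟨(hg.1 k').1, (hg.1 k').2⟩
          · simp only [Fin.snoc_last]; omega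
        · intro j hj
          simp only [hs, Finset.mem_filter] at hj
          have := hj.2
          funext k
          rcases Fin.eq_castSucc_or_eq_last k with ⟨k', rfl⟩ | rfl
          · simp [Fin.init]
          · simp [this]
        · intro g hg
          exact Fin.init_snoc _ _
        · intro j hj
          simp only [hs, Finset.mem_filter] at hj
          rw [Fin.prod_univ_castSucc]
          simp [Fin.init, hj.2]
      rw [hA, ihn, hB, ← Finset.sum_mul, ih (n+1) (by omega)]
      rw [← Finset.Ico_add_one_right_eq_Icc, ← Finset.Ico_add_one_right_eq_Icc, ← Finset.Ico_add_one_right_eq_Icc]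
      rw [show n + 1 + d + 1 = n + d + 2 from by omega,
        show n + (d + 1) + 1 = n + d + 2 from by omega,
        show n + 1 + (d + 1) + 1 = n + d + 3 from by omega,
        show n + 1 + (d + 1) = n + d + 2 from by omega,
        show n + 1 + 1 = n + 2 from rfl]
      rw [Finset.prod_eq_prod_Ico_succ_bot (show n + 1 < n + d + 2 from by omega)]
      rw [show n + d + 3 = (n + d + 2) + 1 from rfl,
        Finset.prod_Ico_succ_top (show n + 2 ≤ n + d + 2 from by omega)]
      ring

theorem lattice_path_weight_sum {R : Type*} [CommRing R] (x : ℕ → R)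
    (m n : ℕ) (hm : 1 ≤ m) (hn : 1 ≤ n) :
    (∑ᶠ j : {j : Fin (m - 1) → ℕ // Monotone j ∧ ∀ k, 1 ≤ j k ∧ j k ≤ n},
      ∏ k : Fin (m - 1), (x (j.1 k) - x (j.1 k + ((k : ℕ) + 1))))
    = ∏ t ∈ Finset.Icc (n + 1) (m + n - 1), (x 1 - x t) := by
  classical
  have hset : {j : Fin (m-1) → ℕ | Monotone j ∧ ∀ k, 1 ≤ j k ∧ j k ≤ n}
      = ↑((Fintype.piFinset (fun _ : Fin (m-1) => Finset.Icc 1 n)).filter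
        (fun j => Monotone j)) := by
    ext j
    simp [Fintype.mem_piFinset, and_comm, forall_and]
  have h1 := finsum_subtype_eq_finsum_cond
    (f := fun j : Fin (m-1) → ℕ => ∏ k : Fin (m-1), (x (j k) - x (j k + ((k:ℕ)+1))))
    (fun j => Monotone j ∧ ∀ k, 1 ≤ j k ∧ j k ≤ n)
  rw [h1]
  have : (∑ᶠ (j : Fin (m-1) → ℕ) (_ : Monotone j ∧ ∀ k, 1 ≤ j k ∧ j k ≤ n),
      ∏ k : Fin (m - 1), (x (j k) - x (j k + ((k : ℕ) + 1))))
      = ∑ᶠ j ∈ {j : Fin (m-1) → ℕ | Monotone j ∧ ∀ k, 1 ≤ j k ∧ j k ≤ n},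
      ∏ k : Fin (m - 1), (x (j k) - x (j k + ((k : ℕ) + 1))) := rfl
  rw [this, hset, finsum_mem_coe_finset, lp_key x (m-1) n hn]
  have h2 : n + (m - 1) = m + n - 1 := by omega
  rw [h2]
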